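/- Work in the polynomial ring A = ℚ[H, L, S, c₁, c₂, c₃] and set Z₁ = H + 2L, Z₂ = H + 3L, Z₃ = S. Let F : A[E] → A be the A-linear map determined by F(1) = 1, F(E) = F(E²) = 0, and F(Eⁿ) = h_{n−3}(Z₁, Z₂, Z₃)·Z₁Z₂Z₃ for n ≥ 3; and let ν : ℚ[L, S, c₁, c₂, c₃][H] → ℚ[L, S, c₁, c₂, c₃] be the linear map over ℚ[L, S, c₁, c₂, c₃] determined by ν(1) = ν(H) = 0 and ν(H^k) = ((−2)^{k−1} − (−3)^{k−1})·L^{k−2} for k ≥ 2. Set c₃(TY) := [3c₁H² + 13c₁HL + 12c₁L² − c₂L + c₃ − 8H³ − 52H²L − 108HL² − 72L³] + E·(−4c₁H − 7c₁L + c₁S + 16H² + 66HL + 66L² − LS − S²) + E²·(−10H − 19L + S) + 2E³. Then ν(F(c₃(TY)·(3H + 6L − 2E))) = 12L(c₁ − 6L) + 30LS − 6S². (This is the paper's computation for the SU(2)-model: φ_*(c₃(TY)·[Y]) = 12L(c₁ − 6L) + 30LS − 6S², the A₁ entry of the table of pushforwards of c₃.) -/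

import Mathlib

namespace SU2ModelC3Pushforward

/-- The ring `ℚ[L, S, c₁, c₂, c₃]`: variables `0 ↦ L`, `1 ↦ S`, `2 ↦ c₁`, `3 ↦ c₂`, `4 ↦ c₃`. -/
noncomputable abbrev B : Type := MvPolynomial (Fin 5) ℚ

/-- The ring `A = ℚ[H, L, S, c₁, c₂, c₃]`, realized as `B[H]`. -/
noncomputable abbrev A : Type := Polynomial B

noncomputable def Lb : B := MvPolynomial.X 0
noncomputable def Sb : B := MvPolynomial.X 1
noncomputable def c₁b : B := MvPolynomial.X 2
noncomputable def c₂b : B := MvPolynomial.X 3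
noncomputable def c₃b : B := MvPolynomial.X 4

noncomputable def H : A := Polynomial.X
noncomputable def L : A := Polynomial.C Lb
noncomputable def S : A := Polynomial.C Sb
noncomputable def c₁ : A := Polynomial.C c₁b
noncomputable def c₂ : A := Polynomial.C c₂b
noncomputable def c₃ : A := Polynomial.C c₃b

noncomputable def Z₁ : A := H + 2 * L
noncomputable def Z₂ : A := H + 3 * L
noncomputable def Z₃ : A := S

/-- Complete homogeneous symmetric polynomial `h_j(Z₁, Z₂, Z₃)`. -/
noncomputable def hcomp (j : ℕ) : A :=
  ∑ x ∈ Finset.Nat.antidiagonalTuple 3 j, (Z₁ ^ x 0 * Z₂ ^ x 1 * Z₃ ^ x 2)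

/-- The `A`-linear map `F : A[E] → A` determined by `F(1) = 1`, `F(E) = F(E²) = 0`, and
`F(Eⁿ) = h_{n−3}(Z₁, Z₂, Z₃)·Z₁Z₂Z₃` for `n ≥ 3`. -/
noncomputable def F (p : Polynomial A) : A :=
  p.sum fun n a =>
    a * if n = 0 then 1 else if n ≤ 2 then 0 else hcomp (n - 3) * (Z₁ * Z₂ * Z₃)

/-- The linear map `ν : B[H] → B` determined by `ν(1) = ν(H) = 0` and
`ν(H^k) = ((−2)^{k−1} − (−3)^{k−1})·L^{k−2}` for `k ≥ 2`. -/
noncomputable def ν (p : A) : B :=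
  p.sum fun k a =>
    a * if k ≤ 1 then 0 else ((-2 : B) ^ (k - 1) - (-3 : B) ^ (k - 1)) * Lb ^ (k - 2)

/-- `c₃(TY)` of the SU(2)-model, as an element of `A[E]`. -/
noncomputable def c₃TY : Polynomial A :=
  Polynomial.C (3 * c₁ * H ^ 2 + 13 * c₁ * H * L + 12 * c₁ * L ^ 2 - c₂ * L + c₃
      - 8 * H ^ 3 - 52 * H ^ 2 * L - 108 * H * L ^ 2 - 72 * L ^ 3)
    + Polynomial.X * Polynomial.C (-4 * c₁ * H - 7 * c₁ * L + c₁ * S + 16 * H ^ 2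
      + 66 * H * L + 66 * L ^ 2 - L * S - S ^ 2)
    + Polynomial.X ^ 2 * Polynomial.C (-10 * H - 19 * L + S)
    + 2 * Polynomial.X ^ 3


noncomputable def gF (n : ℕ) : A :=
  if n = 0 then 1 else if n ≤ 2 then 0 else hcomp (n - 3) * (Z₁ * Z₂ * Z₃)

lemma F_add (p q : Polynomial A) : F (p + q) = F p + F q := by
  unfold F
  exact Polynomial.sum_add_index p q _ (fun n => zero_mul _) (fun n a b => add_mul a b _)

lemma F_mon (n : ℕ) (a : A) : F (Polynomial.C a * Polynomial.X ^ n) = a * gF n := by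
  rw [Polynomial.C_mul_X_pow_eq_monomial]
  unfold F gF
  exact Polynomial.sum_monomial_index a _ (zero_mul _)

noncomputable def gν (k : ℕ) : B :=
  if k ≤ 1 then 0 else ((-2 : B) ^ (k - 1) - (-3 : B) ^ (k - 1)) * Lb ^ (k - 2)

lemma ν_add (p q : A) : ν (p + q) = ν p + ν q := by
  unfold ν
  exact Polynomial.sum_add_index p q _ (fun n => zero_mul _) (fun n a b => add_mul a b _)

lemma ν_mon (k : ℕ) (b : B) : ν (Polynomial.C b * Polynomial.X ^ k) = b * gν k := by
  rw [Polynomial.C_mul_X_pow_eq_monomial]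
  unfold ν gν
  exact Polynomial.sum_monomial_index b _ (zero_mul _)

lemma hcomp_zero : hcomp 0 = 1 := by
  unfold hcomp
  rw [Finset.Nat.antidiagonalTuple_zero_right]
  simp

lemma hcomp_one : hcomp 1 = Z₁ + Z₂ + Z₃ := by
  unfold hcomp
  have h : Finset.Nat.antidiagonalTuple 3 1 = {![1,0,0],![0,1,0],![0,0,1]} := by decide
  rw [h, Finset.sum_insert (by decide), Finset.sum_insert (by decide), Finset.sum_singleton]
  norm_num [Matrix.cons_val_zero, Matrix.cons_val_one, Matrix.head_cons, Matrix.cons_val_two, Matrix.tail_cons]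
  ring

/-- For the SU(2)-model,
`φ_*(c₃(TY)·[Y]) = 12L(c₁ − 6L) + 30LS − 6S²`. -/
theorem su2_c3_pushforward :
    ν (F (c₃TY * (Polynomial.C (3 * H + 6 * L) - 2 * Polynomial.X))) =
      12 * Lb * (c₁b - 6 * Lb) + 30 * Lb * Sb - 6 * Sb ^ 2 := by
  classical
  set A0 : A := 3 * c₁ * H ^ 2 + 13 * c₁ * H * L + 12 * c₁ * L ^ 2 - c₂ * L + c₃
      - 8 * H ^ 3 - 52 * H ^ 2 * L - 108 * H * L ^ 2 - 72 * L ^ 3 with hA0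
  set A1 : A := -4 * c₁ * H - 7 * c₁ * L + c₁ * S + 16 * H ^ 2
      + 66 * H * L + 66 * L ^ 2 - L * S - S ^ 2 with hA1
  set A2 : A := -10 * H - 19 * L + S with hA2
  set T : A := 3 * H + 6 * L with hT
  have hP : c₃TY * (Polynomial.C (3 * H + 6 * L) - 2 * Polynomial.X)
      = Polynomial.C (A0 * T) * Polynomial.X ^ 0
        + Polynomial.C (A1 * T - 2 * A0) * Polynomial.X ^ 1
        + Polynomial.C (A2 * T - 2 * A1) * Polynomial.X ^ 2
        + Polynomial.C (2 * T - 2 * A2) * Polynomial.X ^ 3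
        + Polynomial.C (-4 : A) * Polynomial.X ^ 4 := by
    unfold c₃TY
    rw [hA0, hA1, hA2, hT]
    simp only [map_add, map_sub, map_mul, map_pow, map_ofNat, map_neg, map_one,
      Polynomial.C_1]
    ring
  rw [hP, F_add, F_add, F_add, F_add, F_mon, F_mon, F_mon, F_mon, F_mon]
  have hg0 : gF 0 = 1 := rfl
  have hg1 : gF 1 = 0 := rfl
  have hg2 : gF 2 = 0 := rfl
  have hg3 : gF 3 = Z₁ * Z₂ * Z₃ := by
    show (if (3:ℕ) = 0 then 1 else if (3:ℕ) ≤ 2 then 0 else hcomp (3 - 3) * (Z₁ * Z₂ * Z₃))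
      = Z₁ * Z₂ * Z₃
    simp [hcomp_zero]
  have hg4 : gF 4 = (Z₁ + Z₂ + Z₃) * (Z₁ * Z₂ * Z₃) := by
    show (if (4:ℕ) = 0 then 1 else if (4:ℕ) ≤ 2 then 0 else hcomp (4 - 3) * (Z₁ * Z₂ * Z₃))
      = (Z₁ + Z₂ + Z₃) * (Z₁ * Z₂ * Z₃)
    simp [hcomp_one]
  rw [hg0, hg1, hg2, hg3, hg4]
  have hQ : A0 * T * 1 + (A1 * T - 2 * A0) * 0 + (A2 * T - 2 * A1) * 0
      + (2 * T - 2 * A2) * (Z₁ * Z₂ * Z₃)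
      + (-4 : A) * ((Z₁ + Z₂ + Z₃) * (Z₁ * Z₂ * Z₃))
      = Polynomial.C (6*Lb*c₃b - 6*Lb^2*c₂b - 36*Lb^2*Sb^2 + 72*Lb^3*c₁b + 180*Lb^3*Sb
            - 432*Lb^4) * Polynomial.X ^ 0
        + Polynomial.C (3*c₃b - 3*Lb*c₂b - 30*Lb*Sb^2 + 114*Lb^2*c₁b + 258*Lb^2*Sb
            - 864*Lb^3) * Polynomial.X ^ 1
        + Polynomial.C (-6*Sb^2 + 57*Lb*c₁b + 120*Lb*Sb - 636*Lb^2) * Polynomial.X ^ 2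
        + Polynomial.C (9*c₁b + 18*Sb - 204*Lb) * Polynomial.X ^ 3
        + Polynomial.C (-24 : B) * Polynomial.X ^ 4 := by
    rw [hA0, hA1, hA2, hT]
    unfold Z₁ Z₂ Z₃ H L S c₁ c₂ c₃
    simp only [map_add, map_sub, map_mul, map_pow, map_ofNat, map_neg, map_one,
      Polynomial.C_1]
    ring
  rw [hQ, ν_add, ν_add, ν_add, ν_add, ν_mon, ν_mon, ν_mon, ν_mon, ν_mon]
  have hn0 : gν 0 = 0 := rfl
  have hn1 : gν 1 = 0 := rfl
  have hn2 : gν 2 = ((-2 : B) ^ 1 - (-3 : B) ^ 1) * Lb ^ 0 := rfl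
  have hn3 : gν 3 = ((-2 : B) ^ 2 - (-3 : B) ^ 2) * Lb ^ 1 := rfl
  have hn4 : gν 4 = ((-2 : B) ^ 3 - (-3 : B) ^ 3) * Lb ^ 2 := rfl
  rw [hn0, hn1, hn2, hn3, hn4]
  ring


end SU2ModelC3Pushforward
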